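/- Let R be a commutative integral domain and Λ an associative unital R-algebra. Let M and N be finitely generated Λ-modules which are torsion-free as R-modules. If M_𝔪 is a direct summand of N_𝔪 (as Λ_𝔪-modules) for every maximal ideal 𝔪 of R, then there exists an integer k > 0 such that M is a direct summand of N^k. -/

import Mathlib

open scoped TensorProduct

universe u

set_option linter.unusedSectionVars false

section Aux

variable {R : Type u} [CommRing R] [IsDomain R]
    {Λ : Type u} [Ring Λ] [Algebra R Λ]
    {M : Type u} [AddCommGroup M] [Module R M] [Module Λ M] [IsScalarTower R Λ M]

variable (R Λ M) in
noncomputable def iotaAux (A : Type u) [CommRing A] [Algebra R A] : M →ₗ[Λ] M ⊗[R] A where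
  toFun m := m ⊗ₜ 1
  map_add' x y := by simp [TensorProduct.add_tmul]
  map_smul' l x := by simp [TensorProduct.smul_tmul']

lemma iotaAux_isLocalizedModule (S : Submonoid R) :
    IsLocalizedModule S ((iotaAux R Λ M (Localization S)).restrictScalars R) := by
  haveI : IsLocalizedModule S (TensorProduct.mk R (Localization S) M 1) :=
    (isLocalizedModule_iff_isBaseChange S (Localization S) _).mpr
      (TensorProduct.isBaseChange R M (Localization S))
  have h : ((iotaAux R Λ M (Localization S)).restrictScalars R)
      = (TensorProduct.comm R (Localization S) M).toLinearMap ∘ₗ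
        TensorProduct.mk R (Localization S) M 1 := by
    ext m; rfl
  rw [h]
  infer_instance

lemma iotaAux_injective (S : Submonoid R) (hS : (0 : R) ∉ S) [NoZeroSMulDivisors R M] :
    Function.Injective (iotaAux R Λ M (Localization S)) := by
  haveI := iotaAux_isLocalizedModule (Λ := Λ) (M := M) S
  rw [injective_iff_map_eq_zero]
  intro m hm
  obtain ⟨s, hs⟩ := (IsLocalizedModule.eq_zero_iff S
    ((iotaAux R Λ M (Localization S)).restrictScalars R)).mp hm
  rcases smul_eq_zero.mp hs with h | h
  · exact absurd (h ▸ s.2 : (0:R) ∈ S) hS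
  · exact h

variable {N : Type u} [AddCommGroup N] [Module R N] [Module Λ N] [IsScalarTower R Λ N]

/-- Clearing denominators. -/
lemma descend (S : Submonoid R) (hS : (0 : R) ∉ S) [Module.Finite Λ M] [NoZeroSMulDivisors R N]
    (f : (M ⊗[R] Localization S) →ₗ[Λ] (N ⊗[R] Localization S)) :
    ∃ (s : R) (f₀ : M →ₗ[Λ] N), s ∈ S ∧
      ∀ m : M, iotaAux R Λ N (Localization S) (f₀ m) = s • f (iotaAux R Λ M (Localization S) m) := by
  classical
  haveI := iotaAux_isLocalizedModule (Λ := Λ) (M := N) S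
  set A := Localization S
  set ιM := iotaAux R Λ M A
  set ιN := iotaAux R Λ N A
  obtain ⟨T, hT⟩ := Module.Finite.fg_top (R := Λ) (M := M)
  -- for each generator pick a denominator
  choose p hp using fun m : M =>
    IsLocalizedModule.surj S ((iotaAux R Λ N A).restrictScalars R) (f (ιM m))
  set ss : M → S := fun m => (p m).2 with hss
  set s : S := ∏ m ∈ T, ss m with hs
  have key : ∀ m : M, (s : R) • f (ιM m) ∈ LinearMap.range ιN := by
    intro m
    have hmem : m ∈ Submodule.span Λ (T : Set M) := hT ▸ Submodule.mem_top
    have hrange : ∀ r : R, ∀ x ∈ LinearMap.range ιN, r • x ∈ LinearMap.range ιN := by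
      rintro r x ⟨n, rfl⟩
      exact ⟨r • n, map_smul (ιN.restrictScalars R) r n⟩
    induction hmem using Submodule.span_induction with
    | mem x hx =>
        obtain ⟨u, hu⟩ := Finset.dvd_prod_of_mem ss hx
        have : (s : R) = (ss x : R) * (u : R) := by rw [hs, hu]; simp
        rw [this, mul_comm, mul_smul]
        refine hrange _ _ ?_
        refine ⟨(p x).1, ?_⟩
        have h2 := hp x
        rw [Submonoid.smul_def] at h2
        exact h2.symm
    | zero => simp
    | add x y _ _ hx hy => rw [map_add, map_add, smul_add]; exact Submodule.add_mem _ hx hy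
    | smul l x _ hx =>
        rw [map_smul, map_smul, smul_comm (s : R) l]
        exact Submodule.smul_mem _ l hx
  have hinjN : Function.Injective ιN := iotaAux_injective S hS
  let e : N ≃ₗ[Λ] LinearMap.range ιN := LinearEquiv.ofInjective ιN hinjN
  let hmap : M →ₗ[Λ] N ⊗[R] A := (s : R) • (f ∘ₗ ιM)
  have hmap_apply : ∀ m, hmap m = (s : R) • f (ιM m) := fun m => rfl
  have he : ∀ y : LinearMap.range ιN, ιN (e.symm y) = (y : N ⊗[R] A) := fun y => by
    conv_rhs => rw [← e.apply_symm_apply y]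
    exact (LinearEquiv.ofInjective_apply ιN (e.symm y)).symm
  refine ⟨s, e.symm.toLinearMap ∘ₗ (hmap.codRestrict (LinearMap.range ιN)
    (fun m => hmap_apply m ▸ key m)), s.2, fun m => ?_⟩
  rw [LinearMap.comp_apply]
  rw [LinearEquiv.coe_coe]
  rw [he]
  exact hmap_apply m

end Aux

section Aux2

variable {R : Type u} [CommRing R] [IsDomain R]
    {Λ : Type u} [Ring Λ] [Algebra R Λ]
    {M : Type u} [AddCommGroup M] [Module R M] [Module Λ M] [IsScalarTower R Λ M]
    {N : Type u} [AddCommGroup N] [Module R N] [Module Λ N] [IsScalarTower R Λ N]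

lemma exists_good (𝔪 : Ideal R) (h𝔪 : 𝔪.IsMaximal)
    [Module.Finite Λ M] [Module.Finite Λ N]
    [NoZeroSMulDivisors R M] [NoZeroSMulDivisors R N]
    (f : (M ⊗[R] Localization.AtPrime 𝔪) →ₗ[Λ] (N ⊗[R] Localization.AtPrime 𝔪))
    (g : (N ⊗[R] Localization.AtPrime 𝔪) →ₗ[Λ] (M ⊗[R] Localization.AtPrime 𝔪))
    (hgf : g.comp f = LinearMap.id) :
    ∃ r : R, r ∉ 𝔪 ∧ ∃ (f₀ : M →ₗ[Λ] N) (g₀ : N →ₗ[Λ] M),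
      ∀ m : M, g₀ (f₀ m) = r • m := by
  set S := 𝔪.primeCompl with hSdef
  have hS : (0 : R) ∉ S := fun h0 => h0 𝔪.zero_mem
  obtain ⟨s, f₀, hsS, hf₀⟩ := descend S hS f
  obtain ⟨t, g₀, htS, hg₀⟩ := descend S hS g
  refine ⟨t * s, S.mul_mem htS hsS, f₀, g₀, fun m => ?_⟩
  apply iotaAux_injective (Λ := Λ) (M := M) S hS
  have hgR : ∀ (r : R) (x : N ⊗[R] Localization S), g (r • x) = r • g x := by
    intro r x
    rw [← algebraMap_smul Λ r x, map_smul, algebraMap_smul]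
  have hgfx : ∀ x, g (f x) = x := fun x => LinearMap.congr_fun hgf x
  calc iotaAux R Λ M (Localization S) (g₀ (f₀ m))
      = t • g (iotaAux R Λ N (Localization S) (f₀ m)) := hg₀ _
    _ = t • g (s • f (iotaAux R Λ M (Localization S) m)) := by rw [hf₀]
    _ = (t * s) • (iotaAux R Λ M (Localization S) m) := by
        rw [hgR, hgfx, smul_smul]
    _ = iotaAux R Λ M (Localization S) ((t * s) • m) :=
        (map_smul ((iotaAux R Λ M (Localization S)).restrictScalars R) (t*s) m).symm

end Aux2

section Main

variable {R : Type u} [CommRing R] [IsDomain R]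
    {Λ : Type u} [Ring Λ] [Algebra R Λ]
    {M : Type u} [AddCommGroup M] [Module R M] [Module Λ M] [IsScalarTower R Λ M]
    {N : Type u} [AddCommGroup N] [Module R N] [Module Λ N] [IsScalarTower R Λ N]

variable (Λ M N) in
def GoodAt (k : ℕ) (r : R) : Prop :=
  ∃ (f : M →ₗ[Λ] (Fin k → N)) (g : (Fin k → N) →ₗ[Λ] M), ∀ m : M, g (f m) = r • m

lemma goodAt_zero (k : ℕ) : GoodAt Λ M N k (0 : R) := ⟨0, 0, fun m => by simp⟩

lemma goodAt_add {k k' : ℕ} {r r' : R} (h : GoodAt Λ M N k r) (h' : GoodAt Λ M N k' r') :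
    GoodAt Λ M N (k + k') (r + r') := by
  obtain ⟨f, g, hfg⟩ := h
  obtain ⟨f', g', hfg'⟩ := h'
  let e : ((Fin k → N) × (Fin k' → N)) ≃ₗ[Λ] (Fin (k + k') → N) :=
    (LinearEquiv.sumArrowLequivProdArrow (Fin k) (Fin k') Λ N).symm ≪≫ₗ
      LinearEquiv.funCongrLeft Λ N finSumFinEquiv.symm
  refine ⟨e.toLinearMap ∘ₗ f.prod f',
    (g ∘ₗ (LinearMap.fst Λ _ _) + g' ∘ₗ (LinearMap.snd Λ _ _)) ∘ₗ e.symm.toLinearMap,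
    fun m => ?_⟩
  simp only [LinearMap.comp_apply, LinearEquiv.coe_coe, LinearEquiv.symm_apply_apply,
    LinearMap.add_apply, LinearMap.fst_apply, LinearMap.snd_apply, LinearMap.prod_apply,
    Function.prod, hfg, hfg', add_smul]

lemma goodAt_smul (a : R) {k : ℕ} {r : R} (h : GoodAt Λ M N k r) : GoodAt Λ M N k (a * r) := by
  obtain ⟨f, g, hfg⟩ := h
  have hgR : ∀ (b : R) (x : Fin k → N), g (b • x) = b • g x := fun b x => by
    rw [← algebraMap_smul Λ b x, map_smul, algebraMap_smul]
  let g' : (Fin k → N) →ₗ[Λ] M :=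
    { toFun := fun x => g (a • x)
      map_add' := fun x y => by rw [smul_add, map_add]
      map_smul' := fun l x => by simp only [RingHom.id_apply]; rw [smul_comm a l, map_smul] }
  refine ⟨f, g', fun m => ?_⟩
  show g (a • f m) = (a * r) • m
  rw [hgR, hfg, smul_smul]

end Main

/-- Let `R` be a commutative domain and `Λ` an `R`-algebra.  Let `M`, `N`
be finitely generated `Λ`-modules which are torsion-free as `R`-modules.  If `M_𝔪` is a
direct summand of `N_𝔪` for every maximal ideal `𝔪` of `R`, then there exists `k > 0`
such that `M` is a direct summand of `N^k`.  (A split `Λ`-linear injection between the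
localized modules is the same thing as a split `Λ_𝔪`-linear injection.) -/
theorem stmt5 (R : Type u) [CommRing R] [IsDomain R]
    (Λ : Type u) [Ring Λ] [Algebra R Λ]
    (M : Type u) [AddCommGroup M] [Module R M] [Module Λ M] [IsScalarTower R Λ M]
    [Module.Finite Λ M] [NoZeroSMulDivisors R M]
    (N : Type u) [AddCommGroup N] [Module R N] [Module Λ N] [IsScalarTower R Λ N]
    [Module.Finite Λ N] [NoZeroSMulDivisors R N]
    (h : ∀ (𝔪 : Ideal R) (h𝔪 : 𝔪.IsMaximal),
      ∃ (f : (M ⊗[R] Localization.AtPrime 𝔪) →ₗ[Λ] (N ⊗[R] Localization.AtPrime 𝔪))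
        (g : (N ⊗[R] Localization.AtPrime 𝔪) →ₗ[Λ] (M ⊗[R] Localization.AtPrime 𝔪)),
        g.comp f = LinearMap.id) :
    ∃ k : ℕ, 0 < k ∧ ∃ (f : M →ₗ[Λ] (Fin k → N)) (g : (Fin k → N) →ₗ[Λ] M),
      g.comp f = LinearMap.id := by
  let I : Ideal R :=
    { carrier := {r | ∃ k, GoodAt Λ M N k r}
      add_mem' := fun ⟨k, hk⟩ ⟨k', hk'⟩ => ⟨k + k', goodAt_add hk hk'⟩
      zero_mem' := ⟨0, goodAt_zero 0⟩
      smul_mem' := fun a r ⟨k, hk⟩ => ⟨k, goodAt_smul a hk⟩ }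
  have hI : I = ⊤ := by
    by_contra hne
    obtain ⟨𝔪, h𝔪, hle⟩ := Ideal.exists_le_maximal I hne
    obtain ⟨f, g, hgf⟩ := h 𝔪 h𝔪
    obtain ⟨r, hrm, f₀, g₀, hr⟩ := exists_good 𝔪 h𝔪 f g hgf
    have hrI : r ∈ I :=
      ⟨1, LinearMap.pi fun _ => f₀, g₀ ∘ₗ LinearMap.proj 0, fun m => by simp [hr]⟩
    exact hrm (hle hrI)
  have h1 : (1 : R) ∈ I := (Ideal.eq_top_iff_one I).mp hI
  obtain ⟨k, hk⟩ := h1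
  have h2 : GoodAt Λ M N (k + 1) ((1 : R) + 0) := goodAt_add hk (goodAt_zero 1)
  rw [add_zero] at h2
  obtain ⟨f, g, hfg⟩ := h2
  exact ⟨k + 1, Nat.succ_pos k, f, g, LinearMap.ext fun m => by simpa using hfg m⟩
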